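/- arXiv:1507.08323 — 2 statements merged into one kernel-verified Lean document; each statement's English description precedes it below -/
import Mathlib

section
/- Let T = diag(λ₁, ..., λ_N) be a diagonal matrix on ℝ^N. Then T is convex-cyclic on ℝ^N if and only if the λ_k are distinct and λ_k < −1 for all k. When convex-cyclic, the convex-cyclic vectors are exactly the vectors with all coordinates nonzero. -/
/-- A real convex-polynomial: a convex combination of the monomials `1, x, x², …`. -/
def IsConvexPolyR (p : Polynomial ℝ) : Prop :=
  ∃ (n : ℕ) (a : ℕ → ℝ), (∀ k, 0 ≤ a k) ∧ (∑ k ∈ Finset.range (n + 1), a k) = 1 ∧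
    p = ∑ k ∈ Finset.range (n + 1), Polynomial.C (a k) * Polynomial.X ^ k

/-- `v` is a convex-cyclic vector for the matrix `T` on `ℝ^N`. -/
def IsConvexCyclicVectorR {N : ℕ} (T : Matrix (Fin N) (Fin N) ℝ) (v : Fin N → ℝ) : Prop :=
  Dense {w : Fin N → ℝ | ∃ p, IsConvexPolyR p ∧ (Polynomial.aeval T p).mulVec v = w}

open Polynomial Matrix Finset Filter

lemma aeval_diag {N : ℕ} (lam : Fin N → ℝ) (p : ℝ[X]) :
    aeval (Matrix.diagonal lam) p = Matrix.diagonal (fun k => p.eval (lam k)) := by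
  have h1 : aeval ((Matrix.diagonalAlgHom (R := ℝ)) lam) p
      = (Matrix.diagonalAlgHom (R := ℝ)) (aeval lam p) := (aeval_algHom_apply _ lam p)
  simp only [Matrix.diagonalAlgHom_apply] at h1
  have h2 : (aeval lam) p = fun k => p.eval (lam k) := by
    funext k; rw [aeval_fn_apply]; rfl
  rw [h1, h2]

lemma mulVec_formula {N : ℕ} (lam : Fin N → ℝ) (p : ℝ[X]) (v : Fin N → ℝ) :
    (aeval (Matrix.diagonal lam) p).mulVec v = fun k => p.eval (lam k) * v k := by
  rw [aeval_diag]
  funext k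
  rw [Matrix.mulVec_diagonal]

lemma pow_ge_neg_one {x : ℝ} (hx : -1 ≤ x) (k : ℕ) : -1 ≤ x ^ k := by
  rcases le_or_gt 1 x with h | h
  · exact le_trans (by norm_num) (one_le_pow₀ h)
  · have habs : |x| ≤ 1 := abs_le.mpr ⟨hx, h.le⟩
    have : |x ^ k| ≤ 1 := by rw [abs_pow]; exact pow_le_one₀ (abs_nonneg x) habs
    linarith [(abs_le.mp this).1]

lemma convexPoly_eval_ge {p : ℝ[X]} (hp : IsConvexPolyR p) {x : ℝ} (hx : -1 ≤ x) :
    -1 ≤ p.eval x := by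
  obtain ⟨n, a, ha, hsum, rfl⟩ := hp
  rw [eval_finset_sum]
  calc (-1 : ℝ) = ∑ k ∈ Finset.range (n + 1), (-(a k)) := by
        rw [Finset.sum_neg_distrib, hsum]
    _ ≤ _ := by
        apply Finset.sum_le_sum
        intro k _
        simp only [eval_mul, eval_C, eval_pow, eval_X]
        calc -(a k) = a k * (-1) := by ring
          _ ≤ a k * x ^ k := mul_le_mul_of_nonneg_left (pow_ge_neg_one hx k) (ha k)

lemma isConvexPoly_pow (n : ℕ) : IsConvexPolyR (X ^ n : ℝ[X]) := by
  refine ⟨n, fun k => if k = n then 1 else 0, fun k => by positivity, by simp, ?_⟩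
  rw [Finset.sum_eq_single n] <;> simp +contextual

lemma isConvexPoly_one : IsConvexPolyR (1 : ℝ[X]) := by
  simpa using isConvexPoly_pow 0

lemma sum_ite_smul {E : Type*} [AddCommMonoid E] [Module ℝ E] {n₁ n : ℕ} (h : n₁ ≤ n)
    (f : ℕ → ℝ) (M : ℕ → E) :
    ∑ k ∈ Finset.range (n + 1), (if k ≤ n₁ then f k else 0) • M k
      = ∑ k ∈ Finset.range (n₁ + 1), f k • M k := by
  have hsub : Finset.range (n₁ + 1) ⊆ Finset.range (n + 1) :=
    Finset.range_subset_range.mpr (by omega)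
  calc ∑ k ∈ Finset.range (n + 1), (if k ≤ n₁ then f k else 0) • M k
      = ∑ k ∈ Finset.range (n₁ + 1), (if k ≤ n₁ then f k else 0) • M k := by
        refine (Finset.sum_subset hsub ?_).symm
        intro k _ hk
        rw [Finset.mem_range] at hk
        rw [if_neg (by omega), zero_smul]
    _ = ∑ k ∈ Finset.range (n₁ + 1), f k • M k := by
        apply Finset.sum_congr rfl
        intro k hk
        rw [Finset.mem_range] at hk
        rw [if_pos (by omega)]

lemma isConvexPoly_combo {p q : ℝ[X]} (hp : IsConvexPolyR p) (hq : IsConvexPolyR q)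
    {s t : ℝ} (hs : 0 ≤ s) (ht : 0 ≤ t) (hst : s + t = 1) :
    IsConvexPolyR (s • p + t • q) := by
  obtain ⟨n₁, f, hf, hfsum, rfl⟩ := hp
  obtain ⟨n₂, g, hg, hgsum, rfl⟩ := hq
  set n := max n₁ n₂ with hn
  set f' : ℕ → ℝ := fun k => if k ≤ n₁ then f k else 0 with hf'
  set g' : ℕ → ℝ := fun k => if k ≤ n₂ then g k else 0 with hg'
  have hf'0 : ∀ k, 0 ≤ f' k := fun k => by
    rw [hf']; dsimp only; split_ifs; exacts [hf k, le_rfl]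
  have hg'0 : ∀ k, 0 ≤ g' k := fun k => by
    rw [hg']; dsimp only; split_ifs; exacts [hg k, le_rfl]
  refine ⟨n, fun k => s * f' k + t * g' k,
    fun k => add_nonneg (mul_nonneg hs (hf'0 k)) (mul_nonneg ht (hg'0 k)), ?_, ?_⟩
  · have h1 := sum_ite_smul (le_max_left n₁ n₂) f (fun _ => (1:ℝ))
    have h2 := sum_ite_smul (le_max_right n₁ n₂) g (fun _ => (1:ℝ))
    simp only [smul_eq_mul, mul_one] at h1 h2
    rw [Finset.sum_add_distrib, ← Finset.mul_sum, ← Finset.mul_sum]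
    rw [show (∑ k ∈ Finset.range (n+1), f' k) = ∑ k ∈ Finset.range (n₁+1), f k from h1,
      show (∑ k ∈ Finset.range (n+1), g' k) = ∑ k ∈ Finset.range (n₂+1), g k from h2,
      hfsum, hgsum]
    linarith
  · have h1 := sum_ite_smul (le_max_left n₁ n₂) f (fun k => (X:ℝ[X]) ^ k)
    have h2 := sum_ite_smul (le_max_right n₁ n₂) g (fun k => (X:ℝ[X]) ^ k)
    have expand : ∀ k, (C (s * f' k + t * g' k)) * (X:ℝ[X]) ^ k
        = s • (f' k • (X:ℝ[X]) ^ k) + t • (g' k • (X:ℝ[X]) ^ k) := by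
      intro k
      rw [← smul_eq_C_mul, add_smul, smul_smul, smul_smul]
    calc s • (∑ k ∈ Finset.range (n₁ + 1), C (f k) * (X:ℝ[X]) ^ k)
          + t • (∑ k ∈ Finset.range (n₂ + 1), C (g k) * (X:ℝ[X]) ^ k)
        = s • (∑ k ∈ Finset.range (n + 1), f' k • (X:ℝ[X]) ^ k)
          + t • (∑ k ∈ Finset.range (n + 1), g' k • (X:ℝ[X]) ^ k) := by
          rw [h1, h2]; simp only [smul_eq_C_mul]
      _ = ∑ k ∈ Finset.range (n + 1), C (s * f' k + t * g' k) * (X:ℝ[X]) ^ k := by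
          rw [Finset.smul_sum, Finset.smul_sum, ← Finset.sum_add_distrib]
          exact Finset.sum_congr rfl fun k _ => (expand k).symm

/-- dominant-term growth: if `d j > 0`, `μ j > 1`, and all other terms with nonzero
coefficient have strictly smaller base `0 < μ k < μ j`, the sum tends to infinity. -/
lemma sum_tendsto_atTop {N : ℕ} (μ d : Fin N → ℝ) (j : Fin N)
    (hdj : 0 < d j) (hμj : 1 < μ j)
    (hdom : ∀ k, k ≠ j → d k ≠ 0 → (0 < μ k ∧ μ k < μ j)) :
    Tendsto (fun m : ℕ => ∑ k, d k * μ k ^ m) atTop atTop := by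
  have hμj0 : (0:ℝ) < μ j := lt_trans one_pos hμj
  have key : ∀ m : ℕ, (∑ k, d k * μ k ^ m)
      = μ j ^ m * ∑ k, d k * (μ k / μ j) ^ m := by
    intro m
    rw [Finset.mul_sum]
    apply Finset.sum_congr rfl
    intro k _
    rw [div_pow, mul_comm (μ j ^ m), mul_assoc, div_mul_cancel₀]
    exact pow_ne_zero m (ne_of_gt hμj0)
  simp only [key]
  apply Filter.Tendsto.atTop_mul_pos hdj (tendsto_pow_atTop_atTop_of_one_lt hμj)
  have : Tendsto (fun m : ℕ => ∑ k, d k * (μ k / μ j) ^ m) atTop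
      (nhds (∑ k : Fin N, if k = j then d j else 0)) := by
    apply tendsto_finset_sum
    intro k _
    by_cases hk : k = j
    · subst hk
      simp only [if_pos rfl, div_self (ne_of_gt hμj0)]
      simpa using tendsto_const_nhds
    · rw [if_neg hk]
      by_cases hdk : d k = 0
      · simpa [hdk] using tendsto_const_nhds
      · obtain ⟨h1, h2⟩ := hdom k hk hdk
        have hr0 : (0:ℝ) ≤ μ k / μ j := le_of_lt (div_pos h1 hμj0)
        have hr1 : μ k / μ j < 1 := (div_lt_one hμj0).mpr h2
        have := (tendsto_pow_atTop_nhds_zero_of_lt_one hr0 hr1).const_mul (d k)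
        simpa using this
  simpa using this

/-- The central growth estimate. -/
lemma growth {N : ℕ} (lam : Fin N → ℝ) (hinj : Function.Injective lam)
    (hlt : ∀ k, lam k < -1) (c : Fin N → ℝ) (k₀ : Fin N) (hc : c k₀ ≠ 0) (b : ℝ) :
    ∃ n : ℕ, b < ∑ k, c k * lam k ^ n := by
  classical
  -- choose j maximizing |lam| on the support of c
  have hne : (Finset.univ.filter (fun k => c k ≠ 0)).Nonempty :=
    ⟨k₀, by simp [hc]⟩
  obtain ⟨j, hjmem, hjmax⟩ := Finset.exists_max_image _ (fun k => |lam k|) hne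
  have hcj : c j ≠ 0 := (Finset.mem_filter.mp hjmem).2
  have hlamj : lam j < -1 := hlt j
  have habsj : 1 < |lam j| := by rw [abs_of_neg (by linarith)]; linarith
  -- parity choice
  set s : ℕ := if 0 < c j then 0 else 1 with hs
  have hdj : 0 < c j * lam j ^ s := by
    rcases lt_trichotomy (c j) 0 with h | h | h
    · rw [hs, if_neg (by linarith)]
      rw [pow_one]
      exact mul_pos_of_neg_of_neg h (by linarith)
    · exact absurd h hcj
    · rw [hs, if_pos h, pow_zero, mul_one]; exact h
  set μ : Fin N → ℝ := fun k => lam k ^ 2 with hμ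
  set d : Fin N → ℝ := fun k => c k * lam k ^ s with hd
  have hμj : 1 < μ j := by
    rw [hμ]; dsimp only
    calc (1:ℝ) = 1 ^ 2 := by norm_num
      _ < |lam j| ^ 2 := by
          apply pow_lt_pow_left₀ habsj (by norm_num)
          norm_num
      _ = lam j ^ 2 := by rw [← abs_pow, abs_of_nonneg (sq_nonneg _)]
  have hdom : ∀ k, k ≠ j → d k ≠ 0 → (0 < μ k ∧ μ k < μ j) := by
    intro k hkj hdk
    have hck : c k ≠ 0 := by
      intro h; apply hdk; rw [hd]; dsimp only; rw [h, zero_mul]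
    have hkmem : k ∈ Finset.univ.filter (fun k => c k ≠ 0) := by simp [hck]
    have hle : |lam k| ≤ |lam j| := hjmax k hkmem
    have hlamk : lam k < -1 := hlt k
    have hlt' : |lam k| < |lam j| := by
      rcases lt_or_eq_of_le hle with h | h
      · exact h
      · exfalso
        apply hkj
        apply hinj
        have e1 : lam k = -|lam k| := by rw [abs_of_neg (by linarith)]; ring
        have e2 : lam j = -|lam j| := by rw [abs_of_neg (by linarith)]; ring
        rw [e1, e2, h]
    constructor
    · rw [hμ]; dsimp only
      exact pow_two_pos_of_ne_zero (by linarith)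
    · rw [hμ]; dsimp only
      rw [← sq_abs (lam k), ← sq_abs (lam j)]
      exact pow_lt_pow_left₀ hlt' (abs_nonneg _) (by norm_num)
  have := sum_tendsto_atTop μ d j hdj hμj hdom
  have hev := this.eventually_gt_atTop b
  obtain ⟨m, hm⟩ := hev.exists
  refine ⟨2 * m + s, ?_⟩
  have : ∀ k, d k * μ k ^ m = c k * lam k ^ (2 * m + s) := by
    intro k
    rw [hd, hμ]; dsimp only
    rw [pow_add, pow_mul, mul_comm (c k) (lam k ^ s), mul_assoc]
    ring
  calc b < ∑ k, d k * μ k ^ m := hm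
    _ = ∑ k, c k * lam k ^ (2 * m + s) := Finset.sum_congr rfl fun k _ => this k

-- the orbit set
def OrbS {N : ℕ} (lam : Fin N → ℝ) (v : Fin N → ℝ) : Set (Fin N → ℝ) :=
  {w : Fin N → ℝ | ∃ p, IsConvexPolyR p ∧ (Polynomial.aeval (Matrix.diagonal lam) p).mulVec v = w}

lemma cyclic_iff_dense {N : ℕ} (lam v : Fin N → ℝ) :
    IsConvexCyclicVectorR (Matrix.diagonal lam) v ↔ Dense (OrbS lam v) := Iff.rfl

lemma mem_orbS {N : ℕ} (lam v : Fin N → ℝ) {p : ℝ[X]} (hp : IsConvexPolyR p) :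
    (fun k => p.eval (lam k) * v k) ∈ OrbS lam v :=
  ⟨p, hp, mulVec_formula lam p v⟩

lemma orbS_convex {N : ℕ} (lam v : Fin N → ℝ) : Convex ℝ (OrbS lam v) := by
  rintro w₁ ⟨p, hp, rfl⟩ w₂ ⟨q, hq, rfl⟩ s t hs ht hst
  refine ⟨s • p + t • q, isConvexPoly_combo hp hq hs ht hst, ?_⟩
  rw [map_add, _root_.map_smul, _root_.map_smul, Matrix.add_mulVec, Matrix.smul_mulVec,
    Matrix.smul_mulVec]

lemma not_dense_subset {N : ℕ} {S C : Set (Fin N → ℝ)} (hSC : S ⊆ C) (hC : IsClosed C)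
    {x : Fin N → ℝ} (hx : x ∉ C) : ¬ Dense S := by
  intro h
  exact hx (hC.closure_eq ▸ closure_mono hSC (h x))

lemma not_dense_of_zero {N : ℕ} (lam v : Fin N → ℝ) (i : Fin N) (hv : v i = 0) :
    ¬ Dense (OrbS lam v) := by
  refine not_dense_subset (C := {w : Fin N → ℝ | w i = 0}) ?_
    (isClosed_eq (continuous_apply i) continuous_const) (x := Pi.single i 1) ?_
  · rintro w ⟨p, hp, rfl⟩
    simp [mulVec_formula, hv]
  · show ¬ (Pi.single i 1 : Fin N → ℝ) i = 0
    rw [Pi.single_eq_same]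
    exact one_ne_zero

lemma not_dense_of_ge {N : ℕ} (lam v : Fin N → ℝ) (k : Fin N) (hk : -1 ≤ lam k)
    (hv : v k ≠ 0) : ¬ Dense (OrbS lam v) := by
  apply not_dense_subset (C := {w : Fin N → ℝ | 0 ≤ (w k + v k) * v k})
  · rintro w ⟨p, hp, rfl⟩
    have h1 : -1 ≤ p.eval (lam k) := convexPoly_eval_ge hp hk
    rw [mulVec_formula]
    show (0:ℝ) ≤ (p.eval (lam k) * v k + v k) * v k
    have : (p.eval (lam k) * v k + v k) * v k = (p.eval (lam k) + 1) * (v k * v k) := by ring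
    rw [this]
    exact mul_nonneg (by linarith) (mul_self_nonneg _)
  · exact isClosed_le continuous_const
      (((continuous_apply k).add continuous_const).mul continuous_const)
  · show ¬ (0:ℝ) ≤ ((Pi.single k (-v k - (v k)⁻¹) : Fin N → ℝ) k + v k) * v k
    rw [Pi.single_eq_same]
    have : (-v k - (v k)⁻¹ + v k) * v k = -1 := by
      field_simp
      ring
    rw [this]; norm_num

lemma not_dense_of_eq {N : ℕ} (lam v : Fin N → ℝ) {i j : Fin N} (hij : i ≠ j)
    (hlam : lam i = lam j) (hvi : v i ≠ 0) (hvj : v j ≠ 0) :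
    ¬ Dense (OrbS lam v) := by
  apply not_dense_subset (C := {w : Fin N → ℝ | w i * v j = w j * v i})
  · rintro w ⟨p, hp, rfl⟩
    rw [mulVec_formula]
    show p.eval (lam i) * v i * v j = p.eval (lam j) * v j * v i
    rw [hlam]; ring
  · exact isClosed_eq ((continuous_apply i).mul continuous_const)
      ((continuous_apply j).mul continuous_const)
  · show ¬ ((Pi.single i (v i) : Fin N → ℝ) i * v j = (Pi.single i (v i) : Fin N → ℝ) j * v i)
    rw [Pi.single_eq_same, Pi.single_eq_of_ne (Ne.symm hij)]
    simp [hvi, hvj]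

lemma dense_orbS {N : ℕ} (lam : Fin N → ℝ) (hinj : Function.Injective lam)
    (hlt : ∀ k, lam k < -1) (v : Fin N → ℝ) (hv : ∀ i, v i ≠ 0) :
    Dense (OrbS lam v) := by
  by_contra hnd
  rw [dense_iff_closure_eq] at hnd
  obtain ⟨x, hx⟩ := (Set.ne_univ_iff_exists_notMem _).mp hnd
  obtain ⟨f, u, hfu, hux⟩ := geometric_hahn_banach_closed_point
    ((orbS_convex lam v).closure) isClosed_closure hx
  -- representation of f
  have hrep : ∀ w : Fin N → ℝ, f w = ∑ i, w i * f (Pi.single i 1) := by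
    intro w
    have hw : w = ∑ i, w i • (Pi.single i 1 : Fin N → ℝ) := by
      funext j
      rw [Finset.sum_apply]
      simp [Pi.single_apply]
    calc f w = f (∑ i, w i • (Pi.single i 1 : Fin N → ℝ)) := by rw [← hw]
      _ = ∑ i, w i * f (Pi.single i 1) := by
          rw [map_sum]
          exact Finset.sum_congr rfl fun i _ => by rw [_root_.map_smul, smul_eq_mul]
  -- v ∈ OrbS
  have hvS : v ∈ OrbS lam v := by
    refine ⟨1, isConvexPoly_one, ?_⟩
    rw [_root_.map_one, Matrix.one_mulVec]
  have hfv : f v < u := hfu v (subset_closure hvS)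
  by_cases h0 : ∀ k, f (Pi.single k 1) = 0
  · have : f v = f x := by rw [hrep v, hrep x]; simp [h0]
    linarith
  · push_neg at h0
    obtain ⟨k₀, hk₀⟩ := h0
    set c : Fin N → ℝ := fun k => v k * f (Pi.single k 1) with hc
    have hck₀ : c k₀ ≠ 0 := mul_ne_zero (hv k₀) hk₀
    obtain ⟨n, hn⟩ := growth lam hinj hlt c k₀ hck₀ u
    have hwn : (fun k => lam k ^ n * v k) ∈ OrbS lam v := by
      have := mem_orbS lam v (isConvexPoly_pow n)
      simpa using this
    have hlt' : f (fun k => lam k ^ n * v k) < u := hfu _ (subset_closure hwn)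
    rw [hrep] at hlt'
    have : ∑ i, (lam i ^ n * v i) * f (Pi.single i 1) = ∑ k, c k * lam k ^ n :=
      Finset.sum_congr rfl fun i _ => by rw [hc]; ring
    rw [this] at hlt'
    linarith

/-- Convex-cyclicity of real diagonal matrices. -/
theorem diagonal_convexCyclic_iff_real {N : ℕ} (lam : Fin N → ℝ)
    (T : Matrix (Fin N) (Fin N) ℝ) (hT : T = Matrix.diagonal lam) :
    ((∃ v, IsConvexCyclicVectorR T v) ↔
      (Function.Injective lam ∧ ∀ k, lam k < -1)) ∧
    ((Function.Injective lam ∧ ∀ k, lam k < -1) →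
      ∀ v, IsConvexCyclicVectorR T v ↔ ∀ i, v i ≠ 0) := by
  subst hT
  constructor
  · constructor
    · rintro ⟨v, hv⟩
      rw [cyclic_iff_dense] at hv
      have hv0 : ∀ i, v i ≠ 0 := by
        intro i hi
        exact not_dense_of_zero lam v i hi hv
      constructor
      · intro a b hab
        by_contra hne
        exact not_dense_of_eq lam v hne hab (hv0 a) (hv0 b) hv
      · intro k
        by_contra hk
        push_neg at hk
        exact not_dense_of_ge lam v k hk (hv0 k) hv
    · rintro ⟨hinj, hlt⟩
      exact ⟨fun _ => 1, (cyclic_iff_dense lam _).mpr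
        (dense_orbS lam hinj hlt _ (fun _ => one_ne_zero))⟩
  · rintro ⟨hinj, hlt⟩ v
    rw [cyclic_iff_dense]
    constructor
    · intro hd i
      intro h0
      exact not_dense_of_zero lam v i h0 hd
    · exact dense_orbS lam hinj hlt v
end

section
/- Let z₁, ..., z_n be distinct complex numbers with |z_k| > 1, Im(z_k) ≠ 0 for all k, and z_k ≠ conj(z_j) for all j, k. Then for any complex numbers w₁, ..., w_n there exists a convex-polynomial p with p(z_k) = w_k for all k. -/
open Filter Finset Polynomial Complex Topology

lemma cesaro_pow (μ : ℂ) (hμ : ‖μ‖ = 1) :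
    Tendsto (fun N : ℕ => (∑ m ∈ Finset.range N, μ ^ m) / N) atTop
      (𝓝 (if μ = 1 then 1 else 0)) := by
  split_ifs with h
  · subst h
    apply Tendsto.congr' (f₁ := fun _ : ℕ => (1:ℂ))
    · filter_upwards [eventually_ge_atTop 1] with N hN
      have hN0 : (N:ℂ) ≠ 0 := by
        exact_mod_cast Nat.one_le_iff_ne_zero.mp hN
      simp only [one_pow, Finset.sum_const, Finset.card_range, nsmul_eq_mul, mul_one]
      field_simp
    · exact tendsto_const_nhds
  · have hd : 0 < ‖μ - 1‖ := by
      simpa [norm_pos_iff, sub_eq_zero] using h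
    apply squeeze_zero_norm (a := fun N : ℕ => (2 / ‖μ - 1‖) / N)
    · intro N
      rw [norm_div, geom_sum_eq h, norm_div]
      have h2 : ‖μ ^ N - 1‖ ≤ 2 := by
        calc ‖μ ^ N - 1‖ ≤ ‖μ ^ N‖ + ‖-1‖ := by
              simpa [sub_eq_add_neg] using norm_add_le (μ ^ N) (-1)
          _ = 2 := by rw [norm_pow, hμ]; norm_num
      calc ‖μ ^ N - 1‖ / ‖μ - 1‖ / ‖(N:ℂ)‖
          ≤ 2 / ‖μ - 1‖ / ‖(N:ℂ)‖ := by gcongr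
        _ = 2 / ‖μ - 1‖ / N := by norm_num
    · exact tendsto_const_div_atTop_nhds_zero_nat _

lemma cesaro_sum {α : Type*} (P : Finset α) (c μ : α → ℂ)
    (hμ : ∀ p ∈ P, ‖μ p‖ = 1) :
    Tendsto (fun N : ℕ => (∑ m ∈ Finset.range N, ∑ p ∈ P, c p * μ p ^ m) / N) atTop
      (𝓝 (∑ p ∈ P, if μ p = 1 then c p else 0)) := by
  have key : ∀ N : ℕ, (∑ m ∈ Finset.range N, ∑ p ∈ P, c p * μ p ^ m) / N
      = ∑ p ∈ P, c p * ((∑ m ∈ Finset.range N, μ p ^ m) / N) := by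
    intro N
    rw [Finset.sum_comm, Finset.sum_div]
    refine Finset.sum_congr rfl fun p _ => ?_
    rw [← Finset.mul_sum, mul_div_assoc]
  simp only [key]
  apply tendsto_finset_sum
  intro p hp
  have := (cesaro_pow (μ p) (hμ p hp)).const_mul (c p)
  convert this using 2
  split_ifs <;> simp

lemma cesaro_const (c : ℝ) :
    Tendsto (fun N : ℕ => (∑ _m ∈ Finset.range N, c) / N) atTop (𝓝 c) := by
  apply Tendsto.congr' (f₁ := fun _ : ℕ => c)
  · filter_upwards [eventually_ge_atTop 1] with N hN
    have hN0 : (N:ℝ) ≠ 0 := by exact_mod_cast Nat.one_le_iff_ne_zero.mp hN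
    rw [Finset.sum_const, Finset.card_range, nsmul_eq_mul]
    field_simp
  · exact tendsto_const_nhds

set_option maxHeartbeats 2000000 in
lemma core_unbounded {n : ℕ} (z : Fin n → ℂ) (hdist : Function.Injective z)
    (habs : ∀ k, 1 < ‖z k‖) (him : ∀ k, (z k).im ≠ 0)
    (hconj : ∀ j k, z k ≠ starRingEnd ℂ (z j))
    (c : Fin n → ℂ) (hc : ∃ k, c k ≠ 0) (M : ℝ) :
    ∃ m : ℕ, M ≤ (∑ k, c k * z k ^ m).re := by
  by_contra hcon
  push_neg at hcon
  classical
  obtain ⟨k₀, hk₀⟩ := hc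
  set K : Finset (Fin n) := Finset.univ.filter (fun k => c k ≠ 0) with hKdef
  have hKne : K.Nonempty := ⟨k₀, by simp [hKdef, hk₀]⟩
  set R : ℝ := K.sup' hKne (fun k => ‖z k‖) with hRdef
  obtain ⟨k₁, hk₁K, hk₁R⟩ := Finset.exists_mem_eq_sup' hKne (fun k => ‖z k‖)
  have hR1 : 1 < R := by rw [hRdef, hk₁R]; exact habs k₁
  have hR0 : (0:ℝ) < R := lt_trans one_pos hR1
  have hRC : (R:ℂ) ≠ 0 := by exact_mod_cast hR0.ne'
  set S : Finset (Fin n) := K.filter (fun k => ‖z k‖ = R) with hSdef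
  have hk₁S : k₁ ∈ S := by
    rw [hSdef, Finset.mem_filter]
    exact ⟨hk₁K, hk₁R.symm⟩
  have hSK : S ⊆ K := Finset.filter_subset _ _
  have hcS : ∀ k ∈ K, c k ≠ 0 := fun k hk => (Finset.mem_filter.mp hk).2
  have habsS : ∀ k ∈ S, ‖z k‖ = R := fun k hk => (Finset.mem_filter.mp hk).2
  set lam : Fin n → ℂ := fun k => z k / (R:ℂ) with hlamdef
  have hzlam : ∀ k, z k = (R:ℂ) * lam k := by
    intro k; rw [hlamdef]; field_simp
  have hlam1 : ∀ k ∈ S, ‖lam k‖ = 1 := by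
    intro k hk
    rw [hlamdef]
    simp only [norm_div, habsS k hk, Complex.norm_real, Real.norm_eq_abs, abs_of_pos hR0]
    exact div_self hR0.ne'
  have hlamne1 : ∀ k ∈ S, lam k ≠ 1 := by
    intro k hk h1
    have hz : z k = (R:ℂ) := by rw [hzlam k, h1, mul_one]
    exact him k (by simp [hz])
  have hlam0 : ∀ k ∈ S, lam k ≠ 0 := by
    intro k hk h0
    have := hlam1 k hk
    rw [h0] at this
    simp at this
  have hprod : ∀ k ∈ S, ∀ k' ∈ S, lam k * lam k' ≠ 1 := by
    intro k hk k' hk' h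
    have hzk0 : z k ≠ 0 := by
      intro h0; exact him k (by simp [h0])
    have h1 : z k * z k' = (R:ℂ)^2 := by
      rw [hzlam k, hzlam k']
      calc (R:ℂ) * lam k * ((R:ℂ) * lam k') = (R:ℂ)^2 * (lam k * lam k') := by ring
        _ = (R:ℂ)^2 := by rw [h, mul_one]
    have h2 : z k * (starRingEnd ℂ) (z k) = (R:ℂ)^2 := by
      rw [Complex.mul_conj, Complex.normSq_eq_norm_sq, habsS k hk]
      push_cast
      ring
    have : z k' = (starRingEnd ℂ) (z k) := by
      apply mul_left_cancel₀ hzk0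
      rw [h1, h2]
    exact hconj k k' this
  have hprodc : ∀ k ∈ S, ∀ k' ∈ S, (lam k * (starRingEnd ℂ) (lam k') = 1 ↔ k = k') := by
    intro k hk k' hk'
    constructor
    · intro h
      have h2 : lam k' * (starRingEnd ℂ) (lam k') = 1 := by
        rw [Complex.mul_conj, Complex.normSq_eq_norm_sq, hlam1 k' hk']
        norm_num
      have hc0 : (starRingEnd ℂ) (lam k') ≠ 0 := by
        simp [hlam0 k' hk']
      have : lam k = lam k' := by
        apply mul_right_cancel₀ hc0
        rw [h, h2]
      exact hdist (by rw [hzlam k, hzlam k', this])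
    · intro h
      subst h
      rw [Complex.mul_conj, Complex.normSq_eq_norm_sq, hlam1 k hk]
      norm_num
  set g : ℕ → ℂ := fun m => ∑ k ∈ S, c k * lam k ^ m with hgdef
  set h : ℕ → ℝ := fun m => (g m).re with hhdef
  -- L1
  have hL1 : Tendsto (fun N : ℕ => (∑ m ∈ Finset.range N, g m) / N) atTop (𝓝 0) := by
    have := cesaro_sum S c lam hlam1
    have hzero : (∑ p ∈ S, if lam p = 1 then c p else 0) = 0 :=
      Finset.sum_eq_zero fun p hp => if_neg (hlamne1 p hp)
    rwa [hzero] at this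
  -- L2
  have hg2 : ∀ m, g m ^ 2 = ∑ p ∈ S ×ˢ S, (c p.1 * c p.2) * (lam p.1 * lam p.2) ^ m := by
    intro m
    rw [hgdef, sq, Finset.sum_mul_sum, Finset.sum_product]
    refine Finset.sum_congr rfl fun k _ => Finset.sum_congr rfl fun k' _ => ?_
    rw [mul_pow]; ring
  have hL2 : Tendsto (fun N : ℕ => (∑ m ∈ Finset.range N, g m ^ 2) / N) atTop (𝓝 0) := by
    have hμ : ∀ p ∈ S ×ˢ S, ‖lam p.1 * lam p.2‖ = 1 := by
      intro p hp
      obtain ⟨h1, h2⟩ := Finset.mem_product.mp hp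
      rw [norm_mul, hlam1 _ h1, hlam1 _ h2, mul_one]
    have := cesaro_sum (S ×ˢ S) (fun p => c p.1 * c p.2) (fun p => lam p.1 * lam p.2) hμ
    have hzero : (∑ p ∈ S ×ˢ S, if lam p.1 * lam p.2 = 1 then c p.1 * c p.2 else 0) = 0 := by
      refine Finset.sum_eq_zero fun p hp => ?_
      obtain ⟨h1, h2⟩ := Finset.mem_product.mp hp
      exact if_neg (hprod _ h1 _ h2)
    rw [hzero] at this
    simp only [← hg2] at this
    exact this
  -- L3
  set W : ℝ := ∑ k ∈ S, Complex.normSq (c k) with hWdef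
  have hW : 0 < W := by
    apply Finset.sum_pos' (fun k _ => Complex.normSq_nonneg _)
    exact ⟨k₁, hk₁S, Complex.normSq_pos.mpr (hcS k₁ hk₁K)⟩
  have hgc : ∀ m, g m * (starRingEnd ℂ) (g m)
      = ∑ p ∈ S ×ˢ S, (c p.1 * (starRingEnd ℂ) (c p.2)) * (lam p.1 * (starRingEnd ℂ) (lam p.2)) ^ m := by
    intro m
    rw [hgdef, map_sum, Finset.sum_mul_sum, Finset.sum_product]
    refine Finset.sum_congr rfl fun k _ => Finset.sum_congr rfl fun k' _ => ?_
    rw [map_mul, map_pow, mul_pow]; ring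
  have hL3 : Tendsto (fun N : ℕ => (∑ m ∈ Finset.range N, g m * (starRingEnd ℂ) (g m)) / N)
      atTop (𝓝 (W:ℂ)) := by
    have hμ : ∀ p ∈ S ×ˢ S, ‖lam p.1 * (starRingEnd ℂ) (lam p.2)‖ = 1 := by
      intro p hp
      obtain ⟨h1, h2⟩ := Finset.mem_product.mp hp
      rw [norm_mul, hlam1 _ h1, Complex.norm_conj, hlam1 _ h2, mul_one]
    have key := cesaro_sum (S ×ˢ S) (fun p => c p.1 * (starRingEnd ℂ) (c p.2))
      (fun p => lam p.1 * (starRingEnd ℂ) (lam p.2)) hμ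
    have hval : (∑ p ∈ S ×ˢ S, if lam p.1 * (starRingEnd ℂ) (lam p.2) = 1
        then c p.1 * (starRingEnd ℂ) (c p.2) else 0) = (W:ℂ) := by
      have step1 : ∀ p ∈ S ×ˢ S, (if lam p.1 * (starRingEnd ℂ) (lam p.2) = 1
          then c p.1 * (starRingEnd ℂ) (c p.2) else 0)
          = (if p.1 = p.2 then c p.1 * (starRingEnd ℂ) (c p.2) else 0) := by
        intro p hp
        obtain ⟨h1, h2⟩ := Finset.mem_product.mp hp
        exact if_congr (hprodc _ h1 _ h2) rfl rfl
      rw [Finset.sum_congr rfl step1, Finset.sum_product]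
      rw [hWdef]
      push_cast
      refine Finset.sum_congr rfl fun k hk => ?_
      rw [Finset.sum_ite_eq ..]
      simp [hk, Complex.mul_conj]
    rw [hval] at key
    simp only [← hgc] at key
    exact key
  -- real averages
  have hA1 : Tendsto (fun N : ℕ => (∑ m ∈ Finset.range N, h m) / (N:ℝ)) atTop (𝓝 0) := by
    have := (Complex.continuous_re.tendsto (0:ℂ)).comp hL1
    simp only [Function.comp_def, Complex.zero_re] at this
    apply this.congr
    intro N
    rw [show ((N:ℂ)) = ((N:ℝ):ℂ) by push_cast; ring, Complex.div_ofReal_re, Complex.re_sum]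
  have hA2 : Tendsto (fun N : ℕ => (∑ m ∈ Finset.range N, h m ^ 2) / (N:ℝ)) atTop (𝓝 (W/2)) := by
    have hsum : Tendsto (fun N : ℕ => (∑ m ∈ Finset.range N, (g m ^ 2 + g m * (starRingEnd ℂ) (g m))) / N)
        atTop (𝓝 ((0:ℂ) + (W:ℂ))) := by
      simp only [Finset.sum_add_distrib, add_div]
      exact hL2.add hL3
    have hre := (Complex.continuous_re.tendsto _).comp hsum
    simp only [Function.comp_def, Complex.add_re, Complex.zero_re, Complex.ofReal_re, zero_add] at hre
    have hid : ∀ m, (g m ^ 2 + g m * (starRingEnd ℂ) (g m)).re = 2 * h m ^ 2 := by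
      intro m
      rw [hhdef]
      simp only [Complex.add_re, Complex.mul_re, Complex.conj_re, Complex.conj_im, sq]
      ring
    have hre2 : Tendsto (fun N : ℕ => (∑ m ∈ Finset.range N, 2 * h m ^ 2) / (N:ℝ)) atTop (𝓝 W) := by
      apply hre.congr
      intro N
      rw [show ((N:ℂ)) = ((N:ℝ):ℂ) by push_cast; ring, Complex.div_ofReal_re, Complex.re_sum]
      exact congrArg (· / (N:ℝ)) (Finset.sum_congr rfl fun m _ => hid m)
    apply (hre2.div_const 2).congr
    intro N
    rw [← Finset.mul_sum]
    ring
  -- bounds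
  set B : ℝ := ∑ k ∈ S, ‖c k‖ with hBdef
  have hB : 0 < B := by
    apply Finset.sum_pos' (fun k _ => norm_nonneg _)
    exact ⟨k₁, hk₁S, by simpa using hcS k₁ hk₁K⟩
  have hhB : ∀ m, |h m| ≤ B := by
    intro m
    calc |h m| ≤ ‖g m‖ := Complex.abs_re_le_norm _
      _ ≤ ∑ k ∈ S, ‖c k * lam k ^ m‖ := norm_sum_le _ _
      _ = B := by
          refine Finset.sum_congr rfl fun k hk => ?_
          rw [norm_mul, norm_pow, hlam1 k hk, one_pow, mul_one]
  -- subdominant modulus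
  obtain ⟨ρ, hρ0, hρR, hρz⟩ : ∃ ρ:ℝ, 0 ≤ ρ ∧ ρ < R ∧ ∀ k ∈ K \ S, ‖z k‖ ≤ ρ := by
    rcases (K \ S).eq_empty_or_nonempty with he | hne
    · exact ⟨1, zero_le_one, hR1, by simp [he]⟩
    · refine ⟨(K \ S).sup' hne (fun k => ‖z k‖), ?_, ?_, ?_⟩
      · obtain ⟨k, hk⟩ := hne
        exact le_trans (norm_nonneg _) (Finset.le_sup' (fun k => ‖z k‖) hk)
      · rw [Finset.sup'_lt_iff]
        intro k hk
        obtain ⟨hkK, hkS⟩ := Finset.mem_sdiff.mp hk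
        have hle : ‖z k‖ ≤ R := by
          rw [hRdef]; exact Finset.le_sup' (fun k => ‖z k‖) hkK
        have hne' : ‖z k‖ ≠ R := by
          intro hEq
          exact hkS (Finset.mem_filter.mpr ⟨hkK, hEq⟩)
        exact lt_of_le_of_ne hle hne'
      · intro k hk; exact Finset.le_sup' (fun k => ‖z k‖) hk
  set C0 : ℝ := ∑ k ∈ K \ S, ‖c k‖ with hC0def
  -- splitting the full sum
  have hsplit : ∀ m : ℕ, (∑ k, c k * z k ^ m)
      = (R:ℂ)^m * g m + ∑ k ∈ K \ S, c k * z k ^ m := by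
    intro m
    have h1 : (∑ k, c k * z k ^ m) = ∑ k ∈ K, c k * z k ^ m := by
      symm
      apply Finset.sum_subset (Finset.subset_univ K)
      intro k _ hk
      have : c k = 0 := by
        by_contra hne
        exact hk (Finset.mem_filter.mpr ⟨Finset.mem_univ k, hne⟩)
      simp [this]
    have h2 : ∑ k ∈ S, c k * z k ^ m = (R:ℂ)^m * g m := by
      rw [hgdef, Finset.mul_sum]
      refine Finset.sum_congr rfl fun k hk => ?_
      rw [hzlam k, mul_pow]; ring
    rw [h1, ← Finset.sum_sdiff hSK, h2]
    ring
  have hre : ∀ m : ℕ, (∑ k, c k * z k ^ m).re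
      = R^m * h m + (∑ k ∈ K \ S, c k * z k ^ m).re := by
    intro m
    rw [hsplit m, Complex.add_re]
    congr 1
    rw [show ((R:ℂ))^m = (((R^m : ℝ)):ℂ) by push_cast; ring]
    exact Complex.re_ofReal_mul _ _
  have hrbound : ∀ m : ℕ, |(∑ k ∈ K \ S, c k * z k ^ m).re| ≤ C0 * ρ^m := by
    intro m
    calc |(∑ k ∈ K \ S, c k * z k ^ m).re| ≤ ‖∑ k ∈ K \ S, c k * z k ^ m‖ :=
        Complex.abs_re_le_norm _
      _ ≤ ∑ k ∈ K \ S, ‖c k * z k ^ m‖ := norm_sum_le _ _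
      _ ≤ ∑ k ∈ K \ S, ‖c k‖ * ρ^m := by
          refine Finset.sum_le_sum fun k hk => ?_
          rw [norm_mul, norm_pow]
          exact mul_le_mul_of_nonneg_left
            (pow_le_pow_left₀ (norm_nonneg _) (hρz k hk) m) (norm_nonneg _)
      _ = C0 * ρ^m := by rw [hC0def, Finset.sum_mul]
  -- h m is eventually small
  have hhe : ∀ m : ℕ, h m ≤ M * (1/R)^m + C0 * (ρ/R)^m := by
    intro m
    have hRm : (0:ℝ) < R^m := pow_pos hR0 m
    have h1 : R^m * h m < M + C0 * ρ^m := by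
      have hc' := hcon m
      rw [hre m] at hc'
      have hb := (abs_le.mp (hrbound m)).1
      linarith
    have h2 : h m ≤ (M + C0 * ρ^m) / R^m := by
      rw [le_div_iff₀ hRm]
      linarith [h1]
    calc h m ≤ (M + C0 * ρ^m) / R^m := h2
      _ = M * (1/R)^m + C0 * (ρ/R)^m := by
          rw [div_pow, div_pow, one_pow]
          field_simp
  have htend_e : Tendsto (fun m : ℕ => M * (1/R)^m + C0 * (ρ/R)^m) atTop (𝓝 0) := by
    have h1 : Tendsto (fun m : ℕ => (1/R)^m) atTop (𝓝 0) :=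
      tendsto_pow_atTop_nhds_zero_of_lt_one (by positivity) ((div_lt_one hR0).mpr hR1)
    have h2 : Tendsto (fun m : ℕ => (ρ/R)^m) atTop (𝓝 0) :=
      tendsto_pow_atTop_nhds_zero_of_lt_one (by positivity) ((div_lt_one hR0).mpr hρR)
    have := (h1.const_mul M).add (h2.const_mul C0)
    simpa using this
  set ε : ℝ := W / (8 * B) with hεdef
  have hε : 0 < ε := by positivity
  obtain ⟨M₀, hM₀⟩ : ∃ M₀ : ℕ, ∀ m ≥ M₀, M * (1/R)^m + C0 * (ρ/R)^m < ε := by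
    have := htend_e.eventually (gt_mem_nhds hε)
    exact eventually_atTop.mp this
  have hhε : ∀ m ≥ M₀, h m ≤ ε := fun m hm => le_of_lt (lt_of_le_of_lt (hhe m) (hM₀ m hm))
  set φ : ℕ → ℝ := fun m => B * (2*ε - h m) - h m^2 with hφdef
  have hφ0 : ∀ m, M₀ ≤ m → 0 ≤ φ m := by
    intro m hm
    have h1 : h m ≤ ε := hhε m hm
    have h2 := hhB m
    have h3 : |h m| ≤ 2*ε - h m := abs_le.mpr ⟨by linarith, by linarith⟩
    have h4 : h m ^ 2 = |h m| * |h m| := by rw [← _root_.sq_abs, sq]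
    have h5 : |h m| * |h m| ≤ B * |h m| :=
      mul_le_mul_of_nonneg_right h2 (abs_nonneg _)
    have h6 : B * |h m| ≤ B * (2*ε - h m) :=
      mul_le_mul_of_nonneg_left h3 hB.le
    rw [hφdef]
    simp only
    linarith
  have hφtend : Tendsto (fun N : ℕ => (∑ m ∈ Finset.range N, φ m) / N) atTop
      (𝓝 (2*B*ε - W/2)) := by
    have hcomb := (((cesaro_const (2*B*ε)).sub (hA1.const_mul B)).sub hA2)
    have : Tendsto (fun N : ℕ => (∑ m ∈ Finset.range N, (2*B*ε)) / N
        - B * ((∑ m ∈ Finset.range N, h m) / N) - (∑ m ∈ Finset.range N, h m ^ 2) / N)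
        atTop (𝓝 (2*B*ε - B*0 - W/2)) := hcomb
    rw [show 2*B*ε - B*0 - W/2 = 2*B*ε - W/2 by ring] at this
    apply this.congr
    intro N
    have e1 : ∑ m ∈ Finset.range N, φ m
        = (∑ m ∈ Finset.range N, (2*B*ε)) - B * (∑ m ∈ Finset.range N, h m)
          - (∑ m ∈ Finset.range N, h m ^ 2) := by
      have e0 : ∑ m ∈ Finset.range N, φ m
          = ∑ m ∈ Finset.range N, ((2*B*ε) - B * h m - h m ^ 2) := by
        refine Finset.sum_congr rfl fun m _ => ?_
        rw [hφdef]; ring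
      rw [e0, Finset.sum_sub_distrib, Finset.sum_sub_distrib]
      congr 1
      congr 1
      rw [Finset.mul_sum]
    rw [e1]
    ring
  have hlowbound : ∀ᶠ N : ℕ in atTop, (∑ m ∈ Finset.range M₀, φ m) / (N:ℝ)
      ≤ (∑ m ∈ Finset.range N, φ m) / N := by
    filter_upwards [eventually_ge_atTop (max M₀ 1)] with N hN
    have hN1 : (0:ℝ) < N := by
      have : 1 ≤ N := le_trans (le_max_right _ _) hN
      exact_mod_cast this
    have hNM : M₀ ≤ N := le_trans (le_max_left _ _) hN
    have hsum : (∑ m ∈ Finset.range M₀, φ m) ≤ ∑ m ∈ Finset.range N, φ m := by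
      apply Finset.sum_le_sum_of_subset_of_nonneg
      · exact Finset.range_subset_range.mpr hNM
      · intro m hm hnot
        exact hφ0 m (not_lt.mp (fun hlt => hnot (Finset.mem_range.mpr hlt)))
    exact div_le_div_of_nonneg_right hsum hN1.le
  have hzero : Tendsto (fun N : ℕ => (∑ m ∈ Finset.range M₀, φ m) / (N:ℝ)) atTop (𝓝 0) :=
    tendsto_const_div_atTop_nhds_zero_nat _
  have hfin : (0:ℝ) ≤ 2*B*ε - W/2 := le_of_tendsto_of_tendsto hzero hφtend hlowbound
  have hεval : 2*B*ε = W/4 := by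
    have h8 : (0:ℝ) < 8*B := by positivity
    rw [hεdef, ← mul_div_assoc, div_eq_div_iff h8.ne' (by norm_num : (4:ℝ) ≠ 0)]
    ring
  rw [hεval] at hfin
  linarith

/-- A convex-polynomial: a convex combination of the monomials `1, z, z², …`. -/
def IsConvexPoly (p : Polynomial ℂ) : Prop :=
  ∃ (n : ℕ) (a : ℕ → ℝ), (∀ k, 0 ≤ a k) ∧ (∑ k ∈ Finset.range (n + 1), a k) = 1 ∧
    p = ∑ k ∈ Finset.range (n + 1), Polynomial.C ((a k : ℂ)) * Polynomial.X ^ k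

lemma isConvexPoly_pow_s15 (m : ℕ) : IsConvexPoly (Polynomial.X ^ m) := by
  classical
  refine ⟨m, fun k => if k = m then 1 else 0, fun k => by positivity, ?_, ?_⟩
  · rw [Finset.sum_ite_eq' (Finset.range (m+1)) m fun _ => (1:ℝ)]
    simp
  · rw [Finset.sum_eq_single m]
    · simp
    · intro k _ hk
      simp [hk]
    · intro hm
      exact absurd (Finset.self_mem_range_succ m) hm

lemma isConvexPoly_combo_s15 {p q : Polynomial ℂ} (hp : IsConvexPoly p) (hq : IsConvexPoly q)
    {t : ℝ} (h0 : 0 ≤ t) (h1 : t ≤ 1) :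
    IsConvexPoly (Polynomial.C ((t:ℝ):ℂ) * p + Polynomial.C (((1-t:ℝ)):ℂ) * q) := by
  classical
  obtain ⟨n₁, a₁, ha₁0, ha₁s, hpe⟩ := hp
  obtain ⟨n₂, a₂, ha₂0, ha₂s, hqe⟩ := hq
  set N := max n₁ n₂ with hN
  set a : ℕ → ℝ := fun k => t * (if k ≤ n₁ then a₁ k else 0)
      + (1-t) * (if k ≤ n₂ then a₂ k else 0) with hadef
  have key : ∀ (nn : ℕ) (b : ℕ → ℝ), nn ≤ N →
      ∑ k ∈ Finset.range (N+1), (if k ≤ nn then b k else 0) = ∑ k ∈ Finset.range (nn+1), b k := by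
    intro nn b hnn
    have hsub : Finset.range (nn+1) ⊆ Finset.range (N+1) :=
      Finset.range_subset_range.mpr (by omega)
    have hz : ∀ x ∈ Finset.range (N+1), x ∉ Finset.range (nn+1) →
        (if x ≤ nn then b x else 0) = 0 := by
      intro x _ hx
      rw [if_neg]
      simp only [Finset.mem_range] at hx
      omega
    rw [← Finset.sum_subset hsub hz]
    refine Finset.sum_congr rfl fun k hk => ?_
    simp only [Finset.mem_range] at hk
    rw [if_pos (by omega)]
  refine ⟨N, a, ?_, ?_, ?_⟩
  · intro k
    rw [hadef]
    have h2 : (0:ℝ) ≤ (if k ≤ n₁ then a₁ k else 0) := by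
      split_ifs with hh
      · exact ha₁0 k
      · exact le_refl 0
    have h3 : (0:ℝ) ≤ (if k ≤ n₂ then a₂ k else 0) := by
      split_ifs with hh
      · exact ha₂0 k
      · exact le_refl 0
    have h4 : (0:ℝ) ≤ 1 - t := by linarith
    exact add_nonneg (mul_nonneg h0 h2) (mul_nonneg h4 h3)
  · rw [hadef]
    simp only
    rw [Finset.sum_add_distrib, ← Finset.mul_sum, ← Finset.mul_sum,
      key n₁ a₁ (le_max_left _ _), key n₂ a₂ (le_max_right _ _), ha₁s, ha₂s]
    ring
  · have hcast : ∀ k : ℕ, ((a k : ℝ) : ℂ)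
        = (t:ℂ) * ((if k ≤ n₁ then a₁ k else 0 : ℝ) : ℂ)
          + ((1-t:ℝ):ℂ) * ((if k ≤ n₂ then a₂ k else 0 : ℝ) : ℂ) := by
      intro k
      rw [hadef]
      push_cast
      ring
    have hp' : Polynomial.C ((t:ℝ):ℂ) * p
        = ∑ k ∈ Finset.range (N+1),
            Polynomial.C ((t:ℂ) * ((if k ≤ n₁ then a₁ k else 0 : ℝ) : ℂ)) * Polynomial.X ^ k := by
      rw [hpe, Finset.mul_sum]
      rw [← Finset.sum_subset (Finset.range_subset_range.mpr
        (by omega : n₁+1 ≤ N+1) : Finset.range (n₁+1) ⊆ Finset.range (N+1))]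
      · refine Finset.sum_congr rfl fun k hk => ?_
        simp only [Finset.mem_range] at hk
        rw [if_pos (by omega), Polynomial.C_mul]
        ring
      · intro k _ hk
        simp only [Finset.mem_range] at hk
        rw [if_neg (by omega)]
        simp
    have hq' : Polynomial.C (((1-t:ℝ)):ℂ) * q
        = ∑ k ∈ Finset.range (N+1),
            Polynomial.C (((1-t:ℝ):ℂ) * ((if k ≤ n₂ then a₂ k else 0 : ℝ) : ℂ)) * Polynomial.X ^ k := by
      rw [hqe, Finset.mul_sum]
      rw [← Finset.sum_subset (Finset.range_subset_range.mpr
        (by omega : n₂+1 ≤ N+1) : Finset.range (n₂+1) ⊆ Finset.range (N+1))]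
      · refine Finset.sum_congr rfl fun k hk => ?_
        simp only [Finset.mem_range] at hk
        rw [if_pos (by omega), Polynomial.C_mul]
        ring
      · intro k _ hk
        simp only [Finset.mem_range] at hk
        rw [if_neg (by omega)]
        simp
    rw [hp', hq', ← Finset.sum_add_distrib]
    refine Finset.sum_congr rfl fun k _ => ?_
    rw [hcast k, Polynomial.C_add]
    ring


/-- Interpolation of prescribed complex values by a convex-polynomial. -/
theorem convexPoly_interpolation_complex {n : ℕ} (z : Fin n → ℂ)
    (hdist : Function.Injective z)
    (habs : ∀ k, 1 < ‖z k‖)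
    (him : ∀ k, (z k).im ≠ 0)
    (hconj : ∀ j k, z k ≠ starRingEnd ℂ (z j))
    (w : Fin n → ℂ) :
    ∃ p, IsConvexPoly p ∧ ∀ k, p.eval (z k) = w k := by
  classical
  set Cs : Set (Fin n → ℂ) := {v | ∃ p, IsConvexPoly p ∧ ∀ k, p.eval (z k) = v k} with hCsdef
  have hconv : Convex ℝ Cs := by
    rintro v₁ ⟨p, hp, hpe⟩ v₂ ⟨q, hq, hqe⟩ ta tb hta htb htab
    refine ⟨Polynomial.C ((ta:ℝ):ℂ) * p + Polynomial.C (((1-ta:ℝ)):ℂ) * q, ?_, ?_⟩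
    · exact isConvexPoly_combo_s15 hp hq hta (by linarith)
    · intro k
      have htb' : tb = 1 - ta := by linarith
      simp only [Polynomial.eval_add, Polynomial.eval_mul, Polynomial.eval_C, hpe k, hqe k]
      simp only [Pi.add_apply, Pi.smul_apply, Complex.real_smul, htb']
      try push_cast
      try ring
  have hmono : ∀ m : ℕ, (fun k => z k ^ m) ∈ Cs := by
    intro m
    exact ⟨Polynomial.X ^ m, isConvexPoly_pow_s15 m, fun k => by simp⟩
  have hne : Cs.Nonempty := ⟨_, hmono 0⟩
  have hclos : closure Cs = Set.univ := by
    by_contra hcl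
    obtain ⟨y, hy⟩ : ∃ y, y ∉ closure Cs := by
      by_contra hall
      push_neg at hall
      exact hcl (Set.eq_univ_of_forall hall)
    obtain ⟨f, u, hfu, huy⟩ :=
      geometric_hahn_banach_closed_point (hconv.closure) isClosed_closure hy
    set cc : Fin n → ℂ := fun k =>
      ((f (Pi.single k 1) : ℝ) : ℂ) - Complex.I * ((f (Pi.single k Complex.I) : ℝ) : ℂ) with hccdef
    have hrep : ∀ v : Fin n → ℂ, f v = (∑ k, cc k * v k).re := by
      intro v
      have hv : v = ∑ k, Pi.single k (v k) := by
        ext j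
        rw [Finset.sum_apply]
        simp [Pi.single_apply]
      calc f v = f (∑ k, Pi.single k (v k)) := by rw [← hv]
        _ = ∑ k, f (Pi.single k (v k)) := map_sum f _ _
        _ = (∑ k, cc k * v k).re := ?_
      rw [Complex.re_sum]
      refine Finset.sum_congr rfl fun k _ => ?_
      symm
      have hsingle : (Pi.single k (v k) : Fin n → ℂ)
          = (v k).re • (Pi.single k (1:ℂ) : Fin n → ℂ)
            + (v k).im • (Pi.single k Complex.I : Fin n → ℂ) := by
        ext j
        by_cases hj : j = k
        · subst hj
          simp [Pi.single_apply, Complex.real_smul, Complex.ext_iff]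
        · simp [Pi.single_apply, hj]
      rw [hsingle, map_add, map_smul, map_smul]
      rw [hccdef]
      simp only [smul_eq_mul, Complex.mul_re, Complex.sub_re, Complex.sub_im,
        Complex.ofReal_re, Complex.ofReal_im, Complex.mul_im, Complex.I_re, Complex.I_im]
      ring
    have hcc : ∃ k, cc k ≠ 0 := by
      by_contra hallz
      push_neg at hallz
      have hf0 : ∀ v, f v = 0 := by
        intro v
        rw [hrep v]
        simp [hallz]
      have h1 : f (fun k => z k ^ 0) < u := hfu _ (subset_closure (hmono 0))
      have h2 : u < f y := huy
      rw [hf0] at h1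
      rw [hf0] at h2
      linarith
    obtain ⟨m, hm⟩ := core_unbounded z hdist habs him hconj cc hcc u
    have := hfu _ (subset_closure (hmono m))
    rw [hrep] at this
    exact absurd hm (not_le.mpr this)
  have hspan : affineSpan ℝ Cs = ⊤ := by
    have hsub : (Set.univ : Set (Fin n → ℂ)) ⊆ (affineSpan ℝ Cs : Set (Fin n → ℂ)) := by
      rw [← hclos]
      have h1 : Cs ⊆ (affineSpan ℝ Cs : Set (Fin n → ℂ)) := subset_affineSpan ℝ Cs
      have h2 : IsClosed ((affineSpan ℝ Cs : Set (Fin n → ℂ))) :=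
        (affineSpan ℝ Cs).closed_of_finiteDimensional
      exact closure_minimal h1 h2
    rw [eq_top_iff]
    intro x _
    exact hsub (Set.mem_univ x)
  have hint : (interior Cs).Nonempty := by
    rw [hconv.interior_nonempty_iff_affineSpan_eq_top]
    exact hspan
  obtain ⟨x, hx⟩ := hint
  set y : Fin n → ℂ := w + (w - x) with hydef
  have hy : y ∈ closure Cs := by rw [hclos]; trivial
  have hw : w = (1/2:ℝ) • x + (1/2:ℝ) • y := by
    rw [hydef]
    module
  have hwint : w ∈ interior Cs := by
    rw [hw]
    exact hconv.combo_interior_closure_mem_interior hx hy (by norm_num) (by norm_num)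
      (by norm_num)
  have hwC : w ∈ Cs := interior_subset hwint
  rw [hCsdef] at hwC
  exact hwC
end
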